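/- For an unweighted PDG N with edges L=(X,Y) and full-support cpds p_L, and any γ > 0 and nonnegative weight vector v, the score of the weighted PDG (N, α = v, β = γv) satisfies ⟦(N, v, γv)⟧_γ(μ) = γ · ( E_{w∼μ}[ Σ_L v_L log(1/p_L(y_w|x_w)) ] − H(μ) ), i.e., γ times the Gibbs free energy of the factor graph with factors φ_L(x,y) = p_L(y|x) and weights v; consequently its unique minimizer is the distribution proportional to Π_L p_L(y|x)^{v_L}. -/

import Mathlib

open scoped Classical BigOperators

noncomputable section

/-- `μ` is a probability distribution on the finite set `W`. -/
def IsDist {W : Type*} [Fintype W] (μ : W → ℝ) : Prop :=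
  (∀ w, 0 ≤ μ w) ∧ ∑ w, μ w = 1

/-- Shannon entropy `H(μ)`. -/
def entropy {W : Type*} [Fintype W] (μ : W → ℝ) : ℝ :=
  ∑ w, Real.negMulLog (μ w)

/-- Relative entropy `D(μ‖ν)`, summing over the support of `μ`. -/
def klR {W : Type*} [Fintype W] (μ ν : W → ℝ) : ℝ :=
  ∑ w, if 0 < μ w then μ w * Real.log (μ w / ν w) else 0

/-- Marginal probability of the event `f = a` under `μ`. -/
def pm {W A : Type*} [Fintype W] (μ : W → ℝ) (f : W → A) (a : A) : ℝ :=
  ∑ w, if f w = a then μ w else 0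

/-- Joint probability of `f = a` and `g = b` under `μ`. -/
def pm2 {W A B : Type*} [Fintype W] (μ : W → ℝ) (f : W → A) (g : W → B)
    (a : A) (b : B) : ℝ :=
  ∑ w, if f w = a ∧ g w = b then μ w else 0

/-- Conditional distribution of `g` given `f = a` under `μ`. -/
def condDist {W A B : Type*} [Fintype W] (μ : W → ℝ) (f : W → A) (g : W → B)
    (a : A) : B → ℝ :=
  fun b => pm2 μ f g a b / pm μ f a

/-- Conditional entropy `H(g | f)` under `μ`. -/
def condEnt {W A B : Type*} [Fintype W] [Fintype A] [Fintype B]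
    (μ : W → ℝ) (f : W → A) (g : W → B) : ℝ :=
  ∑ a, ∑ b, if 0 < pm2 μ f g a b then
    -(pm2 μ f g a b * Real.log (pm2 μ f g a b / pm μ f a)) else 0

/-- The incompatibility `Inc(μ) = Σ_L β_L E_{x∼μ_X}[D(μ(Y|X=x) ‖ p_L(x))]`. -/
def Inc {W ι : Type*} [Fintype W] [Fintype ι] {A B : ι → Type*}
    [∀ L, Fintype (A L)] [∀ L, Fintype (B L)]
    (X : (L : ι) → W → A L) (Y : (L : ι) → W → B L)
    (p : (L : ι) → A L → B L → ℝ) (β : ι → ℝ) (μ : W → ℝ) : ℝ :=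
  ∑ L, β L * ∑ a, pm μ (X L) a * klR (condDist μ (X L) (Y L) a) (p L a)

/-- Information deficiency with edge weights `α`: `IDef(μ) = Σ_L α_L H_μ(Y|X) - H(μ)`. -/
def IDefA {W ι : Type*} [Fintype W] [Fintype ι] {A B : ι → Type*}
    [∀ L, Fintype (A L)] [∀ L, Fintype (B L)]
    (X : (L : ι) → W → A L) (Y : (L : ι) → W → B L) (α : ι → ℝ) (μ : W → ℝ) : ℝ :=
  (∑ L, α L * condEnt μ (X L) (Y L)) - entropy μ


lemma pm2_nonneg {W A B : Type*} [Fintype W] (μ : W → ℝ) (hμ : ∀ w, 0 ≤ μ w)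
    (f : W → A) (g : W → B) (a : A) (b : B) : 0 ≤ pm2 μ f g a b :=
  Finset.sum_nonneg fun w _ => by split <;> simp [hμ w]

lemma pm_eq_sum_pm2 {W A B : Type*} [Fintype W] [Fintype B] (μ : W → ℝ)
    (f : W → A) (g : W → B) (a : A) : pm μ f a = ∑ b, pm2 μ f g a b := by
  unfold pm pm2
  rw [Finset.sum_comm]
  refine Finset.sum_congr rfl fun w _ => ?_
  simp [ite_and, Finset.sum_ite_eq]

lemma pm2_le_pm {W A B : Type*} [Fintype W] [Fintype B] (μ : W → ℝ)
    (hμ : ∀ w, 0 ≤ μ w) (f : W → A) (g : W → B) (a : A) (b : B) :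
    pm2 μ f g a b ≤ pm μ f a := by
  rw [pm_eq_sum_pm2 μ f g a]
  exact Finset.single_le_sum (fun b' _ => pm2_nonneg μ hμ f g a b') (Finset.mem_univ b)

lemma edge_identity {W A B : Type*} [Fintype W] [Fintype A] [Fintype B]
    (μ : W → ℝ) (hμ : ∀ w, 0 ≤ μ w) (f : W → A) (g : W → B)
    (q : A → B → ℝ) (hq : ∀ a b, 0 < q a b) :
    (∑ a, pm μ f a * klR (condDist μ f g a) (q a)) + condEnt μ f g
      = ∑ w, μ w * Real.log (1 / q (f w) (g w)) := by
  unfold condEnt klR condDist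
  rw [← Finset.sum_add_distrib]
  have step1 : ∀ a : A,
      pm μ f a * (∑ b, if 0 < pm2 μ f g a b / pm μ f a then
          pm2 μ f g a b / pm μ f a * Real.log (pm2 μ f g a b / pm μ f a / q a b) else 0)
        + (∑ b, if 0 < pm2 μ f g a b then
          -(pm2 μ f g a b * Real.log (pm2 μ f g a b / pm μ f a)) else 0)
      = ∑ b, pm2 μ f g a b * Real.log (1 / q a b) := by
    intro a
    rw [Finset.mul_sum, ← Finset.sum_add_distrib]
    refine Finset.sum_congr rfl fun b _ => ?_
    rcases eq_or_lt_of_le (pm2_nonneg μ hμ f g a b) with h0 | h0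
    · have hr : pm2 μ f g a b / pm μ f a = 0 := by rw [← h0]; simp
      simp [← h0, hr]
    · have hpm : 0 < pm μ f a := lt_of_lt_of_le h0 (pm2_le_pm μ hμ f g a b)
      have hcond : 0 < pm2 μ f g a b / pm μ f a := div_pos h0 hpm
      rw [if_pos hcond, if_pos h0]
      have e1 : pm μ f a * (pm2 μ f g a b / pm μ f a) = pm2 μ f g a b := by
        field_simp
      rw [← mul_assoc, e1]
      rw [Real.log_div (ne_of_gt hcond) (ne_of_gt (hq a b)),
        Real.log_div one_ne_zero (ne_of_gt (hq a b))]
      ring_nf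
      rw [Real.log_one]
      ring
  rw [Finset.sum_congr rfl fun a _ => step1 a]
  unfold pm2
  simp_rw [Finset.sum_mul, ite_mul, zero_mul]
  rw [Finset.sum_congr rfl fun a (_ : a ∈ (Finset.univ : Finset A)) =>
    Finset.sum_comm (f := fun b w => if f w = a ∧ g w = b then μ w * Real.log (1 / q a b) else 0)]
  rw [Finset.sum_comm (f := fun a w => ∑ b, if f w = a ∧ g w = b then μ w * Real.log (1 / q a b) else 0)]
  refine Finset.sum_congr rfl fun w _ => ?_
  simp [ite_and, Finset.sum_ite_eq, Finset.sum_ite_eq']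

/-- Gibbs' inequality, strict version. -/
lemma kl_pos' {W : Type*} [Fintype W] (μ ρ : W → ℝ) (hμ : IsDist μ) (hρ : IsDist ρ)
    (hρpos : ∀ w, 0 < ρ w) (hne : μ ≠ ρ) :
    0 < ∑ w, μ w * Real.log (μ w / ρ w) := by
  have key : ∑ w, (μ w - ρ w) < ∑ w, μ w * Real.log (μ w / ρ w) := by
    obtain ⟨w0, hw0⟩ : ∃ w, μ w ≠ ρ w := by
      by_contra h
      push_neg at h
      exact hne (funext h)
    have hle : ∀ w, μ w - ρ w ≤ μ w * Real.log (μ w / ρ w) := by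
      intro w
      rcases eq_or_lt_of_le (hμ.1 w) with h0 | h0
      · simp [← h0]
        linarith [(hρpos w).le]
      · have h1 : Real.log (ρ w / μ w) ≤ ρ w / μ w - 1 :=
          Real.log_le_sub_one_of_pos (div_pos (hρpos w) h0)
        have h2 : Real.log (μ w / ρ w) = -Real.log (ρ w / μ w) := by
          rw [Real.log_div (ne_of_gt h0) (ne_of_gt (hρpos w)),
            Real.log_div (ne_of_gt (hρpos w)) (ne_of_gt h0)]; ring
        rw [h2]
        have := mul_le_mul_of_nonneg_left h1 h0.le
        have hne' : μ w ≠ 0 := ne_of_gt h0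
        rw [mul_sub, mul_div_cancel₀ _ hne'] at this
        linarith
    apply Finset.sum_lt_sum (fun w _ => hle w)
    refine ⟨w0, Finset.mem_univ _, ?_⟩
    rcases eq_or_lt_of_le (hμ.1 w0) with h0 | h0
    · simp [← h0]
      exact hρpos w0
    · have hne1 : ρ w0 / μ w0 ≠ 1 := by
        intro h
        exact hw0 (by field_simp at h; linarith)
      have h1 : Real.log (ρ w0 / μ w0) < ρ w0 / μ w0 - 1 :=
        Real.log_lt_sub_one_of_pos (div_pos (hρpos w0) h0) hne1
      have h2 : Real.log (μ w0 / ρ w0) = -Real.log (ρ w0 / μ w0) := by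
        rw [Real.log_div (ne_of_gt h0) (ne_of_gt (hρpos w0)),
          Real.log_div (ne_of_gt (hρpos w0)) (ne_of_gt h0)]; ring
      rw [h2]
      have := mul_lt_mul_of_pos_left h1 h0
      have hne' : μ w0 ≠ 0 := ne_of_gt h0
      rw [mul_sub, mul_div_cancel₀ _ hne'] at this
      linarith
  have hzero : ∑ w, (μ w - ρ w) = 0 := by
    rw [Finset.sum_sub_distrib, hμ.2, hρ.2]; ring
  linarith

/-- For an unweighted PDG with full-support cpds `p_L`, any `γ > 0` and nonnegative
weights `v`, the score of the weighted PDG `(N, α = v, β = γv)` equals `γ` times the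
Gibbs free energy of the factor graph with factors `p_L(y|x)` and weights `v`;
consequently its unique minimizer is the distribution proportional to
`Π_L p_L(y|x)^{v_L}`. -/
theorem pdg_score_is_gibbs_free_energy {W ι : Type*} [Fintype W] [Nonempty W]
    [Fintype ι] {A B : ι → Type*} [∀ L, Fintype (A L)] [∀ L, Fintype (B L)]
    (X : (L : ι) → W → A L) (Y : (L : ι) → W → B L)
    (p : (L : ι) → A L → B L → ℝ)
    (hp : ∀ L a, IsDist (p L a)) (hpos : ∀ L a b, 0 < p L a b)
    (v : ι → ℝ) (hv : ∀ L, 0 ≤ v L) (γ : ℝ) (hγ : 0 < γ) :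
    let score : (W → ℝ) → ℝ := fun μ =>
      Inc X Y p (fun L => γ * v L) μ + γ * IDefA X Y v μ
    let Z : ℝ := ∑ w, ∏ L, p L (X L w) (Y L w) ^ v L
    let Pr : W → ℝ := fun w => (∏ L, p L (X L w) (Y L w) ^ v L) / Z
    (∀ μ, IsDist μ →
      score μ =
        γ * ((∑ w, μ w * ∑ L, v L * Real.log (1 / p L (X L w) (Y L w))) -
          entropy μ)) ∧
    IsDist Pr ∧
    (∀ μ, IsDist μ → μ ≠ Pr → score Pr < score μ) := by
  intro score Z Pr
  have hφpos : ∀ w, 0 < ∏ L, p L (X L w) (Y L w) ^ v L := fun w =>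
    Finset.prod_pos fun L _ => Real.rpow_pos_of_pos (hpos L _ _) _
  have hZpos : 0 < Z := Finset.sum_pos (fun w _ => hφpos w) Finset.univ_nonempty
  have hPrpos : ∀ w, 0 < Pr w := fun w => div_pos (hφpos w) hZpos
  have hPr : IsDist Pr := by
    refine ⟨fun w => (hPrpos w).le, ?_⟩
    show ∑ w, (∏ L, p L (X L w) (Y L w) ^ v L) / Z = 1
    rw [← Finset.sum_div]
    exact div_self (ne_of_gt hZpos)
  have part1 : ∀ μ : W → ℝ, IsDist μ → score μ =
      γ * ((∑ w, μ w * ∑ L, v L * Real.log (1 / p L (X L w) (Y L w))) - entropy μ) := by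
    intro μ hμ
    have he : ∀ L, (∑ a, pm μ (X L) a * klR (condDist μ (X L) (Y L) a) (p L a))
        + condEnt μ (X L) (Y L)
        = ∑ w, μ w * Real.log (1 / p L (X L w) (Y L w)) :=
      fun L => edge_identity μ hμ.1 (X L) (Y L) (p L) (hpos L)
    have swap : ∑ L, v L * ∑ w, μ w * Real.log (1 / p L (X L w) (Y L w))
        = ∑ w, μ w * ∑ L, v L * Real.log (1 / p L (X L w) (Y L w)) := by
      simp_rw [Finset.mul_sum]
      rw [Finset.sum_comm (f := fun L w => v L * (μ w * Real.log (1 / p L (X L w) (Y L w))))]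
      exact Finset.sum_congr rfl fun w _ => Finset.sum_congr rfl fun L _ => by ring
    show Inc X Y p (fun L => γ * v L) μ + γ * IDefA X Y v μ = _
    unfold Inc IDefA
    calc (∑ L, γ * v L * ∑ a, pm μ (X L) a * klR (condDist μ (X L) (Y L) a) (p L a))
          + γ * ((∑ L, v L * condEnt μ (X L) (Y L)) - entropy μ)
        = (∑ L, γ * v L * ((∑ a, pm μ (X L) a * klR (condDist μ (X L) (Y L) a) (p L a))
            + condEnt μ (X L) (Y L))) - γ * entropy μ := by
          have h : ∀ L : ι, γ * v L * ((∑ a, pm μ (X L) a * klR (condDist μ (X L) (Y L) a) (p L a))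
              + condEnt μ (X L) (Y L))
              = γ * v L * (∑ a, pm μ (X L) a * klR (condDist μ (X L) (Y L) a) (p L a))
                + γ * (v L * condEnt μ (X L) (Y L)) := fun L => by ring
          rw [Finset.sum_congr rfl fun L _ => h L, Finset.sum_add_distrib,
            mul_sub, Finset.mul_sum]
          ring
      _ = (∑ L, γ * v L * ∑ w, μ w * Real.log (1 / p L (X L w) (Y L w))) - γ * entropy μ := by
          rw [Finset.sum_congr rfl fun L _ => congrArg (γ * v L * ·) (he L)]
      _ = γ * ((∑ w, μ w * ∑ L, v L * Real.log (1 / p L (X L w) (Y L w))) - entropy μ) := by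
          rw [← swap, mul_sub, Finset.mul_sum]
          congr 1
          exact Finset.sum_congr rfl fun L _ => by ring
  refine ⟨part1, hPr, fun μ hμ hne => ?_⟩
  rw [part1 μ hμ, part1 Pr hPr]
  apply (mul_lt_mul_iff_right₀ hγ).mpr
  have hc : ∀ w, (∑ L, v L * Real.log (1 / p L (X L w) (Y L w)))
      = -(Real.log (Pr w) + Real.log Z) := by
    intro w
    have hφ : Real.log (∏ L, p L (X L w) (Y L w) ^ v L)
        = ∑ L, v L * Real.log (p L (X L w) (Y L w)) := by
      rw [Real.log_prod (fun L _ => ne_of_gt (Real.rpow_pos_of_pos (hpos L _ _) _))]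
      exact Finset.sum_congr rfl fun L _ => Real.log_rpow (hpos L _ _) _
    have hPrw : Real.log (Pr w)
        = Real.log (∏ L, p L (X L w) (Y L w) ^ v L) - Real.log Z := by
      show Real.log ((∏ L, p L (X L w) (Y L w) ^ v L) / Z) = _
      rw [Real.log_div (ne_of_gt (hφpos w)) (ne_of_gt hZpos)]
    have hlog : ∀ L : ι, v L * Real.log (1 / p L (X L w) (Y L w))
        = -(v L * Real.log (p L (X L w) (Y L w))) := by
      intro L
      rw [one_div, Real.log_inv]
      ring
    rw [Finset.sum_congr rfl fun L _ => hlog L, Finset.sum_neg_distrib, hφ.symm, hPrw]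
    ring
  have G : ∀ ν : W → ℝ, IsDist ν →
      (∑ w, ν w * ∑ L, v L * Real.log (1 / p L (X L w) (Y L w))) - entropy ν
        = -Real.log Z + ∑ w, ν w * Real.log (ν w / Pr w) := by
    intro ν hν
    unfold entropy
    rw [← Finset.sum_sub_distrib]
    have h1 : -Real.log Z = ∑ w, ν w * (-Real.log Z) := by
      rw [← Finset.sum_mul, hν.2, one_mul]
    rw [h1, ← Finset.sum_add_distrib]
    refine Finset.sum_congr rfl fun w _ => ?_
    rw [hc w]
    rcases eq_or_lt_of_le (hν.1 w) with h0 | h0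
    · simp [← h0, Real.negMulLog]
    · rw [Real.log_div (ne_of_gt h0) (ne_of_gt (hPrpos w)), Real.negMulLog]
      ring
  rw [G μ hμ, G Pr hPr]
  have hz : ∑ w, Pr w * Real.log (Pr w / Pr w) = 0 := by
    refine Finset.sum_eq_zero fun w _ => ?_
    rw [div_self (ne_of_gt (hPrpos w)), Real.log_one, mul_zero]
  rw [hz]
  have hkl := kl_pos' μ Pr hμ hPr hPrpos hne
  linarith
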